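/- Let L ≥ 1 be an integer, m > 0, μ > 0, a > 0, b > 0, p > 0, N₀ > 0 and γ > 0. Let X and Z be independent real random variables on a probability space, where X is exponentially distributed with mean m and Z has the Gamma (Erlang) distribution with integer shape L and scale μ. Set u = γ·p/(a·m) and v = (γ·N₀ + b)/(a·m). Then Pr[ (aX − b)⁺ < γ·(p·Z + N₀) ] = 1 − exp(−v) / (1 + u·μ)^L. (This is the outage probability with co-located primary transmit antennas and an equal number of secondary transmit and receive antennas, M = N.) -/

import Mathlib

open MeasureTheory ProbabilityTheory Finset
open scoped ProbabilityTheory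

open Real Set in
lemma expMeasure_Iio' {r : ℝ} (hr : 0 < r) (t : ℝ) :
    expMeasure r (Set.Iio t) = ENNReal.ofReal (if 0 ≤ t then 1 - Real.exp (-(r * t)) else 0) := by
  rw [expMeasure, gammaMeasure, withDensity_apply _ measurableSet_Iio,
    setLIntegral_congr Iio_ae_eq_Iic]
  exact lintegral_exponentialPDF_eq_antiDeriv hr t

/-- Outage probability with co-located primary transmit antennas and an equal number
of secondary transmit and receive antennas (`M = N`): `X` is exponential with mean
`m`, `Z` is Erlang with integer shape `L` and scale `μ`, `X` and `Z` are
independent, `u = γp/(am)` and `v = (γN₀ + b)/(am)`; then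
`Pr[(aX − b)⁺ < γ(pZ + N₀)] = 1 − e^{−v} / (1 + u·μ)^L`. -/
theorem outage_probability_exponential_erlang
    {Ω : Type*} [MeasureSpace Ω] [IsProbabilityMeasure (ℙ : Measure Ω)]
    {L : ℕ} (hL : 1 ≤ L) {m μ a b p N₀ γ : ℝ}
    (hm : 0 < m) (hμ : 0 < μ) (ha : 0 < a) (hb : 0 < b) (hp : 0 < p)
    (hN₀ : 0 < N₀) (hγ : 0 < γ)
    (X Z : Ω → ℝ) (hX : Measurable X) (hZ : Measurable Z)
    (hXlaw : Measure.map X ℙ = expMeasure m⁻¹)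
    (hZlaw : Measure.map Z ℙ = gammaMeasure L μ⁻¹)
    (hindep : IndepFun X Z ℙ)
    (u v : ℝ) (hu : u = γ * p / (a * m)) (hv : v = (γ * N₀ + b) / (a * m)) :
    (ℙ {ω | max (a * X ω - b) 0 < γ * (p * Z ω + N₀)}).toReal
      = 1 - Real.exp (-v) / (1 + u * μ) ^ L := by
  have hm' : (0:ℝ) < m⁻¹ := inv_pos.mpr hm
  have hμ' : (0:ℝ) < μ⁻¹ := inv_pos.mpr hμ
  have hL' : (0:ℝ) < (L:ℝ) := by exact_mod_cast Nat.lt_of_lt_of_le Nat.zero_lt_one hL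
  have hu0 : 0 < u := by rw [hu]; positivity
  have hv0 : 0 < v := by rw [hv]; positivity
  set r : ℝ := μ⁻¹ with hrdef
  have hr : 0 < r := hμ'
  have hru : 0 < r + u := by positivity
  haveI hPE : IsProbabilityMeasure (expMeasure m⁻¹) := isProbabilityMeasure_gammaMeasure zero_lt_one hm'
  haveI hPX : IsProbabilityMeasure (Measure.map X ℙ) := by
    rw [hXlaw]; exact isProbabilityMeasure_gammaMeasure zero_lt_one hm'
  haveI hPZ : IsProbabilityMeasure (Measure.map Z ℙ) := by
    rw [hZlaw]; exact isProbabilityMeasure_gammaMeasure hL' hμ'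
  haveI hPG : IsProbabilityMeasure (gammaMeasure L r) := isProbabilityMeasure_gammaMeasure hL' hμ'
  set S : Set (ℝ × ℝ) := {q : ℝ × ℝ | max (a * q.2 - b) 0 < γ * (p * q.1 + N₀)} with hSdef
  have hSmeas : MeasurableSet S := by
    apply measurableSet_lt
    · exact (measurable_snd.const_mul a |>.sub measurable_const).max measurable_const
    · exact ((measurable_fst.const_mul p).add measurable_const).const_mul γ
  have hmap : Measure.map (fun ω => (Z ω, X ω)) ℙ = (Measure.map Z ℙ).prod (Measure.map X ℙ) :=
    (indepFun_iff_map_prod_eq_prod_map_map hZ.aemeasurable hX.aemeasurable).mp hindep.symm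
  have h1 : ℙ {ω | max (a * X ω - b) 0 < γ * (p * Z ω + N₀)}
      = ((gammaMeasure L r).prod (expMeasure m⁻¹)) S := by
    rw [← hXlaw, ← hZlaw, ← hmap, Measure.map_apply (hZ.prodMk hX) hSmeas]
    rfl
  -- a.e. nonnegativity under the gamma measure
  have hae : ∀ᵐ z ∂(gammaMeasure L r), (0:ℝ) ≤ z := by
    rw [ae_iff]
    have hset : {z : ℝ | ¬ (0:ℝ) ≤ z} = Set.Iio 0 := by ext z; simp [not_le]
    rw [hset, gammaMeasure, withDensity_apply _ measurableSet_Iio,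
      lintegral_gammaPDF_of_nonpos le_rfl]
  -- the slice measure
  have hslice : ∀ᵐ z ∂(gammaMeasure L r),
      expMeasure m⁻¹ (Prod.mk z ⁻¹' S)
        = 1 - ENNReal.ofReal (Real.exp (-(u * z + v))) := by
    filter_upwards [hae] with z hz
    have hc : 0 < γ * (p * z + N₀) := by positivity
    have hset : Prod.mk z ⁻¹' S = Set.Iio ((γ * (p * z + N₀) + b) / a) := by
      ext x
      simp only [hSdef, Set.mem_preimage, Set.mem_setOf_eq, Set.mem_Iio, max_lt_iff]
      rw [lt_div_iff₀ ha]
      constructor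
      · rintro ⟨h1, -⟩; linarith
      · intro h; exact ⟨by linarith, hc⟩
    have ht : 0 ≤ (γ * (p * z + N₀) + b) / a := by positivity
    rw [hset, expMeasure_Iio' hm', if_pos ht]
    have hexp : m⁻¹ * ((γ * (p * z + N₀) + b) / a) = u * z + v := by
      rw [hu, hv]; field_simp; ring
    rw [hexp, ENNReal.ofReal_sub 1 (Real.exp_nonneg _), ENNReal.ofReal_one]
  -- compute the integral of the exponential factor
  have hpdfmeas : Measurable fun z : ℝ => gammaPDF L r z :=
    (measurable_gammaPDFReal _ _).ennreal_ofReal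
  have hpdfmeas2 : Measurable fun z : ℝ => gammaPDF L (r + u) z :=
    (measurable_gammaPDFReal _ _).ennreal_ofReal
  have hgmeas : Measurable fun z : ℝ => ENNReal.ofReal (Real.exp (-(u * z))) :=
    ((measurable_id.const_mul u).neg.exp).ennreal_ofReal
  have hgvmeas : Measurable fun z : ℝ => ENNReal.ofReal (Real.exp (-(u * z + v))) :=
    (((measurable_id.const_mul u).add_const v).neg.exp).ennreal_ofReal
  have hpdf : ∀ z : ℝ, gammaPDF L r z * ENNReal.ofReal (Real.exp (-(u * z)))
      = ENNReal.ofReal ((r / (r + u)) ^ (L:ℝ)) * gammaPDF L (r + u) z := by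
    intro z
    rcases le_or_gt 0 z with hz | hz
    · rw [gammaPDF_of_nonneg hz, gammaPDF_of_nonneg hz,
        ← ENNReal.ofReal_mul (by positivity), ← ENNReal.ofReal_mul (by positivity)]
      congr 1
      have hG : 0 < Real.Gamma (L:ℝ) := Real.Gamma_pos_of_pos hL'
      have h1 : Real.exp (-(r * z)) * Real.exp (-(u * z)) = Real.exp (-((r + u) * z)) := by
        rw [← Real.exp_add]; ring_nf
      have h2 : (r / (r + u)) ^ (L:ℝ) * (r + u) ^ (L:ℝ) = r ^ (L:ℝ) := by
        rw [Real.div_rpow hr.le hru.le, div_mul_cancel₀]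
        exact (Real.rpow_pos_of_pos hru _).ne'
      rw [← h1, ← h2]; ring
    · rw [gammaPDF_of_neg hz, gammaPDF_of_neg hz, zero_mul, mul_zero]
  have hK : ∫⁻ z, ENNReal.ofReal (Real.exp (-(u * z))) ∂(gammaMeasure L r)
      = ENNReal.ofReal ((r / (r + u)) ^ (L:ℝ)) := by
    rw [gammaMeasure, lintegral_withDensity_eq_lintegral_mul _ hpdfmeas hgmeas]
    simp only [Pi.mul_apply]
    simp_rw [hpdf]
    rw [lintegral_const_mul _ hpdfmeas2, lintegral_gammaPDF_eq_one hL' hru, mul_one]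
  have hJ : ∫⁻ z, ENNReal.ofReal (Real.exp (-(u * z + v))) ∂(gammaMeasure L r)
      = ENNReal.ofReal (Real.exp (-v) * (r / (r + u)) ^ (L:ℝ)) := by
    have : ∀ z : ℝ, ENNReal.ofReal (Real.exp (-(u * z + v)))
        = ENNReal.ofReal (Real.exp (-v)) * ENNReal.ofReal (Real.exp (-(u * z))) := by
      intro z
      rw [← ENNReal.ofReal_mul (Real.exp_nonneg _), ← Real.exp_add]
      ring_nf
    simp_rw [this]
    rw [lintegral_const_mul _ hgmeas, hK, ← ENNReal.ofReal_mul (Real.exp_nonneg _)]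
  have hfrac01 : 0 ≤ (r / (r + u)) ^ (L:ℝ) ∧ (r / (r + u)) ^ (L:ℝ) ≤ 1 := by
    constructor
    · positivity
    · apply Real.rpow_le_one (by positivity) _ hL'.le
      rw [div_le_one hru]; linarith
  have hJle : ENNReal.ofReal (Real.exp (-v) * (r / (r + u)) ^ (L:ℝ)) ≤ 1 := by
    rw [← ENNReal.ofReal_one]
    apply ENNReal.ofReal_le_ofReal
    have h1 : Real.exp (-v) ≤ 1 := Real.exp_le_one_iff.mpr (by linarith)
    calc Real.exp (-v) * (r / (r + u)) ^ (L:ℝ) ≤ 1 * 1 :=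
      mul_le_mul h1 hfrac01.2 hfrac01.1 zero_le_one
    _ = 1 := one_mul 1
  -- put it together
  have hmain : ℙ {ω | max (a * X ω - b) 0 < γ * (p * Z ω + N₀)}
      = 1 - ENNReal.ofReal (Real.exp (-v) * (r / (r + u)) ^ (L:ℝ)) := by
    rw [h1, Measure.prod_apply hSmeas, lintegral_congr_ae hslice]
    rw [lintegral_sub hgvmeas
      (by rw [hJ]; exact ENNReal.ofReal_ne_top)
      (by
        filter_upwards [hae] with z hz
        calc ENNReal.ofReal (Real.exp (-(u * z + v))) ≤ ENNReal.ofReal 1 := by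
              apply ENNReal.ofReal_le_ofReal
              apply Real.exp_le_one_iff.mpr
              nlinarith
        _ = 1 := ENNReal.ofReal_one)]
    rw [lintegral_one, measure_univ, hJ]
  rw [hmain, ENNReal.toReal_sub_of_le hJle ENNReal.one_ne_top, ENNReal.toReal_one,
    ENNReal.toReal_ofReal (by positivity)]
  congr 1
  have hfrac : r / (r + u) = 1 / (1 + u * μ) := by
    rw [div_eq_div_iff hru.ne' (by positivity : (1 + u * μ) ≠ 0), hrdef]
    field_simp
  rw [hfrac, Real.rpow_natCast, div_pow, one_pow, mul_one_div]
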